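/- arXiv:2410.08630 — 5 statements merged into one kernel-verified Lean document; each statement's English description precedes it below -/
import Mathlib

section
/- Let a₁₁, a₁₂ : ℝ → ℝ be continuous, let α, β ∈ ℝ, and let A(t) = [[a₁₁(t), a₁₂(t)], [α·a₁₂(t), a₁₁(t) + β·a₁₂(t)]]. Define D(t) = ∫_{t₀}^t A(s) ds (entrywise). Then Φ(t) := exp(D(t)) satisfies Φ'(t) = A(t)·Φ(t) for all t and Φ(t₀) = I, i.e., Φ is a fundamental matrix of the system ẋ(t) = A(t)·x(t); consequently x(t) = Φ(t)·x₀ is the solution of ẋ = A(t)x with x(t₀) = x₀. -/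
open Matrix MeasureTheory intervalIntegral NormedSpace

attribute [local instance] Matrix.linftyOpNormedRing Matrix.linftyOpNormedAlgebra

/-- For `A(t)` of the special commuting form with continuous entries,
`Φ(t) = exp(D(t))` with `D(t) = ∫_{t₀}^t A(s) ds` is a fundamental matrix of `ẋ = A(t)x`:
it satisfies `Φ'(t) = A(t)Φ(t)` and `Φ(t₀) = I`, and `x(t) = Φ(t)x₀` solves the initial
value problem `ẋ = A(t)x`, `x(t₀) = x₀`. -/
theorem exp_primitive_is_fundamental_matrix
    (α β t₀ : ℝ) (a₁₁ a₁₂ : ℝ → ℝ) (h₁₁ : Continuous a₁₁) (h₁₂ : Continuous a₁₂)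
    (A : ℝ → Matrix (Fin 2) (Fin 2) ℝ)
    (hA : ∀ t, A t = !![a₁₁ t, a₁₂ t; α * a₁₂ t, a₁₁ t + β * a₁₂ t])
    (D : ℝ → Matrix (Fin 2) (Fin 2) ℝ)
    (hD : ∀ t, D t = Matrix.of fun i j => ∫ s in t₀..t, A s i j)
    (Φ : ℝ → Matrix (Fin 2) (Fin 2) ℝ)
    (hΦ : ∀ t, Φ t = exp (D t)) :
    (∀ t, HasDerivAt Φ (A t * Φ t) t) ∧ Φ t₀ = 1 ∧
    ∀ (x₀ : Fin 2 → ℝ) (x : ℝ → Fin 2 → ℝ), (∀ t, x t = (Φ t).mulVec x₀) →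
      (∀ t, HasDerivAt x ((A t).mulVec (x t)) t) ∧ x t₀ = x₀ := by
  set B : Matrix (Fin 2) (Fin 2) ℝ := !![(0:ℝ), 1; α, β] with hB
  set c : ℝ → ℝ := fun t => ∫ s in t₀..t, a₁₁ s with hcdef
  set d : ℝ → ℝ := fun t => ∫ s in t₀..t, a₁₂ s with hddef
  have hc : ∀ t, HasDerivAt c (a₁₁ t) t := fun t =>
    intervalIntegral.integral_hasDerivAt_right (h₁₁.intervalIntegrable _ _)
      (h₁₁.stronglyMeasurableAtFilter _ _) h₁₁.continuousAt
  have hd : ∀ t, HasDerivAt d (a₁₂ t) t := fun t =>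
    intervalIntegral.integral_hasDerivAt_right (h₁₂.intervalIntegrable _ _)
      (h₁₂.stronglyMeasurableAtFilter _ _) h₁₂.continuousAt
  have hAeq : ∀ t, A t = a₁₁ t • 1 + a₁₂ t • B := by
    intro t
    rw [hA t, hB]
    ext i j
    fin_cases i <;> fin_cases j <;>
      simp [Matrix.one_apply] <;> ring
  have hDeq : ∀ t, D t = c t • 1 + d t • B := by
    intro t
    have h10 : (∫ s in t₀..t, α * a₁₂ s) = α * d t :=
      intervalIntegral.integral_const_mul α a₁₂
    have h11 : (∫ s in t₀..t, (a₁₁ s + β * a₁₂ s)) = c t + β * d t := by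
      rw [intervalIntegral.integral_add (f := a₁₁) (g := fun s => β * a₁₂ s) (h₁₁.intervalIntegrable t₀ t)
        ((continuous_const.mul h₁₂ : Continuous fun s => β * a₁₂ s).intervalIntegrable t₀ t),
        intervalIntegral.integral_const_mul]
    rw [hD t, hB]
    ext i j
    fin_cases i <;> fin_cases j <;>
      simp [hA, Matrix.one_apply, hcdef, hddef, h10, h11] <;> ring
  have hΦeq : ∀ t, Φ t = Real.exp (c t) • exp (d t • B) := by
    intro t
    rw [hΦ t, hDeq t,
      Matrix.exp_add_of_commute _ _ (((Commute.one_left (d t • B)).smul_left (c t)))]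
    rw [← Algebra.algebraMap_eq_smul_one]
    have hm : exp (algebraMap ℝ (Matrix (Fin 2) (Fin 2) ℝ) (c t))
        = algebraMap ℝ (Matrix (Fin 2) (Fin 2) ℝ) (Real.exp (c t)) := by
      rw [Real.exp_eq_exp_ℝ]; exact (NormedSpace.algebraMap_exp_comm (c t)).symm
    rw [hm,
      Algebra.algebraMap_eq_smul_one, smul_mul_assoc, one_mul]
  have key : ∀ t, HasDerivAt Φ (A t * Φ t) t := by
    intro t
    have hexp : HasDerivAt (fun t => exp (d t • B)) (a₁₂ t • (B * exp (d t • B))) t := by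
      have := (hasDerivAt_exp_smul_const' (𝕂 := ℝ) B (d t)).scomp t (hd t)
      exact this
    have hsc : HasDerivAt (fun t => Real.exp (c t)) (Real.exp (c t) * a₁₁ t) t :=
      (Real.hasDerivAt_exp (c t)).comp t (hc t)
    have hmain := hsc.smul hexp
    have hfun : Φ = fun t => Real.exp (c t) • exp (d t • B) := funext hΦeq
    rw [hfun]
    refine hmain.congr_deriv ?_
    simp only [hAeq t, add_mul, smul_mul_assoc, one_mul, mul_smul_comm, smul_smul]
    module
  refine ⟨key, ?_, ?_⟩
  · rw [hΦ t₀, hD t₀]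
    have : (Matrix.of fun i j => ∫ s in t₀..t₀, A s i j) = (0 : Matrix (Fin 2) (Fin 2) ℝ) := by
      ext i j; simp
    rw [this, NormedSpace.exp_zero]
  · intro x₀ x hx
    have hxf : x = fun t => (Φ t).mulVec x₀ := funext hx
    constructor
    · intro t
      set Lm : Matrix (Fin 2) (Fin 2) ℝ →L[ℝ] (Fin 2 → ℝ) :=
        LinearMap.toContinuousLinearMap
          { toFun := fun M => M.mulVec x₀
            map_add' := fun M N => Matrix.add_mulVec M N x₀
            map_smul' := fun r M => Matrix.smul_mulVec r M x₀ } with hLm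
      have hcomp := Lm.hasFDerivAt.comp_hasDerivAt t (key t)
      have hLval : ∀ M, Lm M = M.mulVec x₀ := fun M => rfl
      rw [hxf]
      have : HasDerivAt (fun t => (Φ t).mulVec x₀) ((A t * Φ t).mulVec x₀) t := by
        exact hcomp
      simpa [← Matrix.mulVec_mulVec, hx t] using this
    · rw [hx t₀]
      have : Φ t₀ = 1 := by
        rw [hΦ t₀, hD t₀]
        have h0 : (Matrix.of fun i j => ∫ s in t₀..t₀, A s i j)
            = (0 : Matrix (Fin 2) (Fin 2) ℝ) := by ext i j; simp
        rw [h0, NormedSpace.exp_zero]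
      rw [this, Matrix.one_mulVec]
end

section
/- Let α, β ∈ ℝ with α + β²/4 > 0 and β > 0, set γ = √(α + β²/4) and M = [[−β/2, 1], [α, β/2]]. Let f, g : ℝ → ℝ with f bounded and g(t) → ∞ as t → ∞, and define Φ(t) = e^{f(t) + (β/2)g(t)} · exp(g(t)·M). Then ‖Φ(t)‖ → ∞ as t → ∞. -/
open Matrix NormedSpace Filter

attribute [local instance] Matrix.linftyOpNormedRing Matrix.linftyOpNormedAlgebra

lemma my_entry_le_norm (A : Matrix (Fin 2) (Fin 2) ℝ) (i j : Fin 2) : |A i j| ≤ ‖A‖ := by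
  have h1 : ‖A i j‖₊ ≤ ‖A‖₊ := by
    rw [Matrix.linfty_opNNNorm_def]
    exact le_trans (Finset.single_le_sum (f := fun k => ‖A i k‖₊) (fun k _ => zero_le)
      (Finset.mem_univ j))
      (Finset.le_sup (f := fun i => ∑ j, ‖A i j‖₊) (Finset.mem_univ i))
  simpa [Real.norm_eq_abs] using (NNReal.coe_le_coe.2 h1 : (‖A i j‖₊ : ℝ) ≤ ‖A‖₊)

lemma my_exp_entry (α β γ : ℝ) (hγ : 0 < γ) (hγ2 : γ ^ 2 = α + β ^ 2 / 4) (s : ℝ) :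
    NormedSpace.exp (s • (!![-β/2, 1; α, β/2] : Matrix (Fin 2) (Fin 2) ℝ)) 0 1
      = (Real.exp (s * γ) - Real.exp (-(s * γ))) / (2 * γ) := by
  set P : Matrix (Fin 2) (Fin 2) ℝ := !![1, 1; γ + β/2, β/2 - γ] with hP
  have hdet : P.det = -(2 * γ) := by
    simp [hP, Matrix.det_fin_two_of]; ring
  have hU : IsUnit P := by
    rw [Matrix.isUnit_iff_isUnit_det, hdet, isUnit_iff_ne_zero]
    exact neg_ne_zero.2 (by positivity)
  have hPinv : P⁻¹ = (-(2 * γ))⁻¹ • !![β/2 - γ, -1; -(γ + β/2), 1] := by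
    rw [Matrix.inv_def, hdet, hP, Matrix.adjugate_fin_two_of, Ring.inverse_eq_inv']
  have hγ2' : γ * γ = α + β ^ 2 / 4 := by nlinarith
  have hd : (Matrix.diagonal ![s * γ, -(s * γ)] : Matrix (Fin 2) (Fin 2) ℝ)
      = !![s * γ, 0; 0, -(s * γ)] := by
    ext i j; fin_cases i <;> fin_cases j <;> simp [Matrix.diagonal]
  have hconj : s • (!![-β/2, 1; α, β/2] : Matrix (Fin 2) (Fin 2) ℝ)
      = P * (Matrix.diagonal ![s * γ, -(s * γ)]) * P⁻¹ := by
    rw [hPinv, hd]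
    ext i j
    fin_cases i <;> fin_cases j <;>
      · simp [hP, Matrix.mul_apply, Fin.sum_univ_two]
        field_simp
        first
          | nlinarith [hγ2', sq_nonneg s, sq_nonneg γ]
          | linear_combination (64 * s * γ ^ 2) * hγ2'
          | linear_combination (-8 * s) * hγ2'
  rw [hconj, Matrix.exp_conj P _ hU, Matrix.exp_diagonal, hPinv]
  have hpi : NormedSpace.exp (![s * γ, -(s * γ)] : Fin 2 → ℝ)
      = ![Real.exp (s * γ), Real.exp (-(s * γ))] := by
    rw [Pi.exp_def]
    funext i
    fin_cases i <;> simp [Real.exp_eq_exp_ℝ]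
  rw [hpi]
  have hd2 : (Matrix.diagonal ![Real.exp (s * γ), Real.exp (-(s * γ))] :
      Matrix (Fin 2) (Fin 2) ℝ) = !![Real.exp (s * γ), 0; 0, Real.exp (-(s * γ))] := by
    ext i j; fin_cases i <;> fin_cases j <;> simp [Matrix.diagonal]
  rw [hd2]
  simp [hP, Matrix.mul_apply, Fin.sum_univ_two]
  field_simp
  ring

/-- Case `γ > 0`, `β > 0`: if `f` is bounded and `g(t) → ∞`, then `‖Φ(t)‖ → ∞` as `t → ∞`,
where `Φ(t) = e^{f(t)+(β/2)g(t)}·exp(g(t)M)`. -/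
theorem norm_Phi_tendsto_atTop_of_g_atTop (α β : ℝ) (hpos : 0 < α + β ^ 2 / 4) (hβ : 0 < β)
    (M : Matrix (Fin 2) (Fin 2) ℝ) (hM : M = !![-β/2, 1; α, β/2])
    (f g : ℝ → ℝ) (hf : ∃ C, ∀ t, |f t| ≤ C)
    (hg : Tendsto g atTop atTop)
    (Φ : ℝ → Matrix (Fin 2) (Fin 2) ℝ)
    (hΦ : ∀ t, Φ t = Real.exp (f t + β/2 * g t) • NormedSpace.exp (g t • M)) :
    Tendsto (fun t => ‖Φ t‖) atTop atTop := by
  obtain ⟨C, hC⟩ := hf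
  set γ := Real.sqrt (α + β ^ 2 / 4) with hγdef
  have hγ : 0 < γ := Real.sqrt_pos.2 hpos
  have hγ2 : γ ^ 2 = α + β ^ 2 / 4 := Real.sq_sqrt hpos.le
  have hentry : ∀ t, Φ t 0 1 = Real.exp (f t + β/2 * g t) *
      ((Real.exp (g t * γ) - Real.exp (-(g t * γ))) / (2 * γ)) := by
    intro t
    rw [hΦ t, hM, Matrix.smul_apply, my_exp_entry α β γ hγ hγ2 (g t)]
    simp [smul_eq_mul]
  have hlow : Tendsto (fun t => Real.exp (-C) / (4 * γ) * Real.exp (g t * γ)) atTop atTop := by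
    apply Tendsto.const_mul_atTop (by positivity)
    exact Real.tendsto_exp_atTop.comp (Tendsto.atTop_mul_const hγ hg)
  apply tendsto_atTop_mono' atTop _ hlow
  filter_upwards [hg.eventually_ge_atTop 0, hg.eventually_ge_atTop (Real.log 2 / γ)]
    with t h0 h2
  have hE2 : (2:ℝ) ≤ Real.exp (g t * γ) := by
    rw [← Real.exp_log (by norm_num : (0:ℝ) < 2)]
    apply Real.exp_le_exp.2
    rw [div_le_iff₀ hγ] at h2
    linarith
  have hE' : Real.exp (-(g t * γ)) ≤ 1 := by
    rw [Real.exp_le_one_iff]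
    nlinarith
  have hf' : Real.exp (-C) ≤ Real.exp (f t + β/2 * g t) := by
    apply Real.exp_le_exp.2
    have := (abs_le.1 (hC t)).1
    nlinarith [hβ.le]
  have hval : Real.exp (-C) / (4 * γ) * Real.exp (g t * γ) ≤ Φ t 0 1 := by
    rw [hentry t]
    have hstep : Real.exp (g t * γ) / (4 * γ)
        ≤ (Real.exp (g t * γ) - Real.exp (-(g t * γ))) / (2 * γ) := by
      rw [div_le_div_iff₀ (by positivity) (by positivity)]
      nlinarith
    calc Real.exp (-C) / (4 * γ) * Real.exp (g t * γ)
        = Real.exp (-C) * (Real.exp (g t * γ) / (4 * γ)) := by ring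
      _ ≤ Real.exp (f t + β/2 * g t)
            * ((Real.exp (g t * γ) - Real.exp (-(g t * γ))) / (2 * γ)) := by
          apply mul_le_mul hf' hstep (by positivity) (Real.exp_pos _).le
  exact le_trans hval (le_trans (le_abs_self _) (my_entry_le_norm (Φ t) 0 1))
end

section
/- Let a₁₁, a₁₂ : ℝ → ℝ be continuous and T-periodic, let α, β ∈ ℝ, and let A(t) = [[a₁₁(t), a₁₂(t)], [α·a₁₂(t), a₁₁(t) + β·a₁₂(t)]]. Define D(t) = ∫₀^t A(s) ds and Φ(t) = exp(D(t)) (the fundamental matrix with Φ(0) = I). Then the monodromy matrix is C = Φ(T) = exp(D(T)), and the constant matrix B := (1/T)·D(T) = (1/T)∫₀^T A(s) ds satisfies C = exp(T·B); hence the Floquet exponents (eigenvalues of B) are the eigenvalues of the time-average matrix Ā = (1/T)∫₀^T A(s) ds, and are given explicitly by λ± = ā₁₁ + (β/2)·ā₁₂ ± γ·ā₁₂, where ā₁₁ = (1/T)∫₀^T a₁₁, ā₁₂ = (1/T)∫₀^T a₁₂, and γ² = α + β²/4. -/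
open Matrix MeasureTheory intervalIntegral NormedSpace Polynomial

attribute [local instance] Matrix.linftyOpNormedRing Matrix.linftyOpNormedAlgebra

/-- For a `T`-periodic matrix of the special commuting form, the fundamental matrix is
`Φ(t) = exp(D(t))` with `D(t) = ∫₀ᵗ A(s) ds`, the monodromy matrix is `C = Φ(T) = exp(D(T))`,
and `B = (1/T)·D(T)` (the time-average of `A`) satisfies `C = exp(TB)`; the Floquet exponents
(the eigenvalues of `B`, i.e. of the average matrix `Ā`) are
`λ± = ā₁₁ + (β/2)ā₁₂ ± γ·ā₁₂` with `γ² = α + β²/4`. -/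
theorem floquet_exponents_of_specialForm
    (α β T : ℝ) (hT : 0 < T)
    (a₁₁ a₁₂ : ℝ → ℝ) (h₁₁ : Continuous a₁₁) (h₁₂ : Continuous a₁₂)
    (hper₁₁ : ∀ t, a₁₁ (t + T) = a₁₁ t) (hper₁₂ : ∀ t, a₁₂ (t + T) = a₁₂ t)
    (A : ℝ → Matrix (Fin 2) (Fin 2) ℝ)
    (hA : ∀ t, A t = !![a₁₁ t, a₁₂ t; α * a₁₂ t, a₁₁ t + β * a₁₂ t])
    (D : ℝ → Matrix (Fin 2) (Fin 2) ℝ)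
    (hD : ∀ t, D t = Matrix.of fun i j => ∫ s in (0:ℝ)..t, A s i j)
    (Φ : ℝ → Matrix (Fin 2) (Fin 2) ℝ) (hΦ : ∀ t, Φ t = exp (D t))
    (B : Matrix (Fin 2) (Fin 2) ℝ) (hB : B = T⁻¹ • D T)
    (γ : ℂ) (hγ : γ ^ 2 = (α : ℂ) + (β : ℂ) ^ 2 / 4)
    (a₁₁bar a₁₂bar : ℝ)
    (h₁₁bar : a₁₁bar = T⁻¹ * ∫ s in (0:ℝ)..T, a₁₁ s)
    (h₁₂bar : a₁₂bar = T⁻¹ * ∫ s in (0:ℝ)..T, a₁₂ s) :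
    (∀ t, Φ (t + T) = Φ t * Φ T) ∧
    Φ T = exp (D T) ∧
    exp (T • B) = Φ T ∧
    B = (Matrix.of fun i j => T⁻¹ * ∫ s in (0:ℝ)..T, A s i j) ∧
    (B.map (algebraMap ℝ ℂ)).charpoly =
      (X - C ((a₁₁bar : ℂ) + (β : ℂ)/2 * a₁₂bar + γ * a₁₂bar)) *
      (X - C ((a₁₁bar : ℂ) + (β : ℂ)/2 * a₁₂bar - γ * a₁₂bar)) := by
  set M : Matrix (Fin 2) (Fin 2) ℝ := !![0, 1; α, β] with hM
  -- Entrywise structure of D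
  have key : ∀ t, D t = (∫ s in (0:ℝ)..t, a₁₁ s) • (1 : Matrix (Fin 2) (Fin 2) ℝ)
      + (∫ s in (0:ℝ)..t, a₁₂ s) • M := by
    intro t
    have hi1 : IntervalIntegrable a₁₁ volume 0 t := h₁₁.intervalIntegrable _ _
    have hi2 : IntervalIntegrable a₁₂ volume 0 t := h₁₂.intervalIntegrable _ _
    rw [hD]
    ext i j
    fin_cases i <;> fin_cases j <;>
      simp [hA, hM, Matrix.smul_apply, intervalIntegral.integral_const_mul,
        integral_add hi1 (hi2.const_mul β)] <;> ring
  -- Additivity of the scalar integrals under period shift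
  have hadd : ∀ (a : ℝ → ℝ), Continuous a → (∀ t, a (t + T) = a t) → ∀ t,
      (∫ s in (0:ℝ)..(t + T), a s) = (∫ s in (0:ℝ)..t, a s) + ∫ s in (0:ℝ)..T, a s := by
    intro a ha hper t
    have h1 : (∫ s in (0:ℝ)..(t + T), a s)
        = (∫ s in (0:ℝ)..t, a s) + ∫ s in t..(t + T), a s := by
      rw [integral_add_adjacent_intervals (ha.intervalIntegrable _ _)
        (ha.intervalIntegrable _ _)]
    have hper' : Function.Periodic a T := hper
    have h2 : (∫ s in t..(t + T), a s) = ∫ s in (0:ℝ)..(0 + T), a s :=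
      hper'.intervalIntegral_add_eq t 0
    rw [h1, h2, zero_add]
  have hDadd : ∀ t, D (t + T) = D t + D T := by
    intro t
    rw [key, key, key, hadd a₁₁ h₁₁ hper₁₁ t, hadd a₁₂ h₁₂ hper₁₂ t, add_smul, add_smul]
    abel
  have hcomm : ∀ t, Commute (D t) (D T) := by
    intro t
    rw [key, key]
    show _ * _ = _ * _
    simp only [add_mul, mul_add, smul_mul_assoc, mul_smul_comm, smul_smul,
      one_mul, mul_one]
    module
  have c1 : ∀ t, Φ (t + T) = Φ t * Φ T := by
    intro t
    rw [hΦ, hΦ, hΦ, hDadd t]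
    exact Matrix.exp_add_of_commute _ _ (hcomm t)
  refine ⟨c1, hΦ T, ?_, ?_, ?_⟩
  · rw [hB, smul_smul, mul_inv_cancel₀ hT.ne', one_smul, hΦ T]
  · rw [hB, hD]
    ext i j
    simp [Matrix.smul_apply]
  · -- B as an explicit matrix
    have hBval : B = !![a₁₁bar, a₁₂bar; α * a₁₂bar, a₁₁bar + β * a₁₂bar] := by
      rw [hB, key T]
      ext i j
      fin_cases i <;> fin_cases j <;>
        simp [hM, Matrix.smul_apply, h₁₁bar, h₁₂bar] <;> ring
    have hmap : B.map (algebraMap ℝ ℂ) =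
        !![(a₁₁bar : ℂ), (a₁₂bar : ℂ); (α : ℂ) * a₁₂bar, (a₁₁bar : ℂ) + (β : ℂ) * a₁₂bar] := by
      rw [hBval]
      ext i j
      fin_cases i <;> fin_cases j <;>
        simp [Matrix.map_apply, Complex.coe_algebraMap] <;> push_cast <;> ring
    rw [hmap, Matrix.charpoly, Matrix.det_fin_two,
      charmatrix_apply_eq, charmatrix_apply_eq,
      charmatrix_apply_ne _ _ _ (by decide : (0 : Fin 2) ≠ 1),
      charmatrix_apply_ne _ _ _ (by decide : (1 : Fin 2) ≠ 0)]
    have expand : ∀ a d b c : ℂ, (X - C a) * (X - C d) - -C b * -C c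
        = X ^ 2 - C (a + d) * X + C (a * d - b * c) := by
      intro a d b c
      simp only [C_add, C_mul, C_sub]
      ring
    have expand2 : ∀ u v : ℂ, (X - C u) * (X - C v)
        = X ^ 2 - C (u + v) * X + C (u * v) := by
      intro u v
      simp only [C_add, C_mul]
      ring
    simp only [expand, expand2, Matrix.of_apply, Matrix.cons_val', Matrix.cons_val_zero,
      Matrix.cons_val_one, Matrix.head_cons, Matrix.empty_val', Matrix.cons_val_fin_one,
      Matrix.head_fin_const]
    have hs : (a₁₁bar : ℂ) + ((a₁₁bar : ℂ) + (β : ℂ) * (a₁₂bar : ℂ))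
        = ((a₁₁bar : ℂ) + (β : ℂ)/2 * a₁₂bar + γ * a₁₂bar)
          + ((a₁₁bar : ℂ) + (β : ℂ)/2 * a₁₂bar - γ * a₁₂bar) := by ring
    have hp : (a₁₁bar : ℂ) * ((a₁₁bar : ℂ) + (β : ℂ) * (a₁₂bar : ℂ))
          - (a₁₂bar : ℂ) * ((α : ℂ) * (a₁₂bar : ℂ))
        = ((a₁₁bar : ℂ) + (β : ℂ)/2 * a₁₂bar + γ * a₁₂bar)
          * ((a₁₁bar : ℂ) + (β : ℂ)/2 * a₁₂bar - γ * a₁₂bar) := by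
      linear_combination ((a₁₂bar : ℂ)) ^ 2 * hγ
    rw [hs, neg_mul_neg, ← C_mul, add_sub_assoc, ← C_sub, hp]
end

section
/- Let σ₀, σ₁, σ₂ ∈ ℝ with σ₂ ≠ 0, let a : ℝ → ℝ be continuous and T-periodic, and let A(t) = [[σ₀ − a(t), −σ₂·a(t)], [σ₁·a(t), σ₀ + a(t)]]. Then A(t) has the special commuting form [[a₁₁(t), a₁₂(t)], [α·a₁₂(t), a₁₁(t) + β·a₁₂(t)]] with α = −σ₁/σ₂, β = −2/σ₂, a₁₁ = σ₀ − a, a₁₂ = −σ₂·a, and the Floquet exponents of the system ẋ = A(t)x are λ± = σ₀ ± (√(1 − σ₁σ₂)/T)·∫₀^T a(s) ds (where for σ₁σ₂ > 1 the square root is purely imaginary). -/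
open Matrix MeasureTheory intervalIntegral Polynomial

/-- The example of Grau et al.: `A(t) = [[σ₀−a, −σ₂a], [σ₁a, σ₀+a]]` has the special
commuting form with `α = −σ₁/σ₂`, `β = −2/σ₂`, `a₁₁ = σ₀−a`, `a₁₂ = −σ₂a`, and the
Floquet exponents (eigenvalues of the time-average matrix `Ā = (1/T)∫₀ᵀ A`) are
`λ± = σ₀ ± γ·(1/T)∫₀ᵀ a` where `γ² = 1 − σ₁σ₂` (purely imaginary when `σ₁σ₂ > 1`). -/
theorem floquet_exponents_grau_example
    (σ₀ σ₁ σ₂ : ℝ) (hσ₂ : σ₂ ≠ 0) (T : ℝ) (hT : 0 < T)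
    (a : ℝ → ℝ) (ha : Continuous a) (haper : ∀ t, a (t + T) = a t)
    (A : ℝ → Matrix (Fin 2) (Fin 2) ℝ)
    (hA : ∀ t, A t = !![σ₀ - a t, -σ₂ * a t; σ₁ * a t, σ₀ + a t])
    (Abar : Matrix (Fin 2) (Fin 2) ℝ)
    (hAbar : Abar = Matrix.of fun i j => T⁻¹ * ∫ s in (0:ℝ)..T, A s i j)
    (γ : ℂ) (hγ : γ ^ 2 = 1 - (σ₁ : ℂ) * σ₂) :
    (∀ t, A t =
      !![(σ₀ - a t), (-σ₂ * a t);
         (-σ₁/σ₂) * (-σ₂ * a t), (σ₀ - a t) + (-2/σ₂) * (-σ₂ * a t)]) ∧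
    (Abar.map (algebraMap ℝ ℂ)).charpoly =
      (X - C ((σ₀ : ℂ) + γ * ((T⁻¹ : ℝ) * ∫ s in (0:ℝ)..T, a s : ℝ))) *
      (X - C ((σ₀ : ℂ) - γ * ((T⁻¹ : ℝ) * ∫ s in (0:ℝ)..T, a s : ℝ))) := by
  have hint : IntervalIntegrable a volume 0 T := ha.intervalIntegrable 0 T
  set I : ℝ := ∫ s in (0:ℝ)..T, a s with hI
  set m : ℝ := T⁻¹ * I with hm
  have e00 : Abar 0 0 = σ₀ - m := by
    rw [hAbar]
    simp only [Matrix.of_apply]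
    have : ∀ s : ℝ, A s 0 0 = σ₀ - a s := by intro s; rw [hA]; simp
    simp only [this]
    rw [intervalIntegral.integral_sub intervalIntegrable_const hint,
      intervalIntegral.integral_const]
    rw [hm]
    field_simp
    ring
  have e01 : Abar 0 1 = -σ₂ * m := by
    rw [hAbar]
    simp only [Matrix.of_apply]
    have : ∀ s : ℝ, A s 0 1 = -σ₂ * a s := by intro s; rw [hA]; simp
    simp only [this]
    rw [intervalIntegral.integral_const_mul]
    rw [hm]; ring
  have e10 : Abar 1 0 = σ₁ * m := by
    rw [hAbar]
    simp only [Matrix.of_apply]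
    have : ∀ s : ℝ, A s 1 0 = σ₁ * a s := by intro s; rw [hA]; simp
    simp only [this]
    rw [intervalIntegral.integral_const_mul]
    rw [hm]; ring
  have e11 : Abar 1 1 = σ₀ + m := by
    rw [hAbar]
    simp only [Matrix.of_apply]
    have : ∀ s : ℝ, A s 1 1 = σ₀ + a s := by intro s; rw [hA]; simp
    simp only [this]
    rw [intervalIntegral.integral_add intervalIntegrable_const hint,
      intervalIntegral.integral_const]
    rw [hm]
    field_simp
    ring
  constructor
  · intro t
    rw [hA t]
    ext i j
    fin_cases i <;> fin_cases j <;> simp <;> field_simp <;> ring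
  · rw [Matrix.charpoly, Matrix.det_fin_two,
      Matrix.charmatrix_apply_eq, Matrix.charmatrix_apply_eq,
      Matrix.charmatrix_apply_ne _ _ _ (by decide : (0 : Fin 2) ≠ 1),
      Matrix.charmatrix_apply_ne _ _ _ (by decide : (1 : Fin 2) ≠ 0)]
    simp only [Matrix.map_apply, e00, e01, e10, e11]
    have hmap : ∀ x : ℝ, algebraMap ℝ ℂ x = (x : ℂ) := fun x => rfl
    simp only [hmap]
    push_cast
    have expand : ∀ p q r s : ℂ,
        (X - C p) * (X - C q) - -C r * -C s
          = X ^ 2 - C (p + q) * X + C (p * q - r * s) := by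
      intro p q r s
      simp only [C_add, C_mul, C_sub]
      ring
    rw [expand]
    have expand2 : ∀ p q : ℂ,
        (X - C p) * (X - C q) = X ^ 2 - C (p + q) * X + C (p * q - 0 * 0) := by
      intro p q
      simp only [C_add, C_mul, C_sub, C_0]
      ring
    rw [expand2]
    congr 1
    · congr 2
      push_cast
      ring
    · congr 1
      have : γ * (σ₁ : ℂ) * σ₂ = γ * σ₁ * σ₂ := rfl
      have h2 : ((σ₀:ℂ) - m) * ((σ₀:ℂ) + m) - -(σ₂:ℂ) * m * ((σ₁:ℂ) * m)
          = (σ₀:ℂ)^2 - (1 - (σ₁:ℂ)*σ₂) * (m:ℂ)^2 := by ring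
      rw [h2, ← hγ]
      ring
end

section
/- Let σ₀, σ₁, σ₂ ∈ ℝ with σ₂ ≠ 0, σ₀ < 0 and σ₁·σ₂ > 1, let a : ℝ → ℝ be continuous and T-periodic, and let A(t) = [[σ₀ − a(t), −σ₂·a(t)], [σ₁·a(t), σ₀ + a(t)]]. Then every solution x : ℝ → ℝ² of ẋ(t) = A(t)·x(t) satisfies x(t) → 0 as t → ∞; i.e., the zero solution is asymptotically stable. -/
open Matrix Filter

/-- Asymptotic stability in the example of Grau et al.: if `σ₀ < 0` and `σ₁σ₂ > 1`,
every solution of `ẋ = A(t)x` with `A(t) = [[σ₀−a(t), −σ₂a(t)], [σ₁a(t), σ₀+a(t)]]`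
tends to `0` as `t → ∞`. -/
theorem zero_solution_asymptotically_stable
    (σ₀ σ₁ σ₂ : ℝ) (hσ₂ : σ₂ ≠ 0) (hσ₀ : σ₀ < 0) (hσ₁₂ : 1 < σ₁ * σ₂)
    (T : ℝ) (hT : 0 < T)
    (a : ℝ → ℝ) (ha : Continuous a) (haper : ∀ t, a (t + T) = a t)
    (A : ℝ → Matrix (Fin 2) (Fin 2) ℝ)
    (hA : ∀ t, A t = !![σ₀ - a t, -σ₂ * a t; σ₁ * a t, σ₀ + a t])
    (x : ℝ → Fin 2 → ℝ)
    (hx : ∀ t, HasDerivAt x ((A t).mulVec (x t)) t) :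
    Tendsto x atTop (nhds 0) := by
  set ω : ℝ := Real.sqrt (σ₁ * σ₂ - 1) with hωdef
  have hω2 : ω ^ 2 = σ₁ * σ₂ - 1 := Real.sq_sqrt (by linarith)
  have hωpos : 0 < ω := Real.sqrt_pos.mpr (by linarith)
  have hωne : ω ≠ 0 := ne_of_gt hωpos
  set α : ℝ → ℝ := fun u => ∫ s in (0:ℝ)..u, a s with hαdef
  have hα : ∀ t, HasDerivAt α (a t) t := fun t =>
    intervalIntegral.integral_hasDerivAt_right (ha.intervalIntegrable _ _)
      ha.stronglyMeasurable.stronglyMeasurableAtFilter ha.continuousAt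
  -- componentwise derivatives
  have hx0 : ∀ t, HasDerivAt (fun u => x u 0)
      ((σ₀ - a t) * x t 0 + (-σ₂ * a t) * x t 1) t := by
    intro t
    have h := hasDerivAt_pi.mp (hx t) 0
    simpa [hA, Matrix.mulVec, dotProduct, Fin.sum_univ_two] using h
  have hx1 : ∀ t, HasDerivAt (fun u => x u 1)
      (σ₁ * a t * x t 0 + (σ₀ + a t) * x t 1) t := by
    intro t
    have h := hasDerivAt_pi.mp (hx t) 1
    simpa [hA, Matrix.mulVec, dotProduct, Fin.sum_univ_two] using h
  -- cos/sin of ω α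
  have hc : ∀ t, HasDerivAt (fun u => Real.cos (ω * α u))
      (-Real.sin (ω * α t) * (ω * a t)) t := fun t => ((hα t).const_mul ω).cos
  have hs : ∀ t, HasDerivAt (fun u => Real.sin (ω * α u))
      (Real.cos (ω * α t) * (ω * a t)) t := fun t => ((hα t).const_mul ω).sin
  have hE : ∀ t, HasDerivAt (fun u => Real.exp (-σ₀ * u))
      (Real.exp (-σ₀ * t) * (-σ₀)) t := fun t => by
    simpa using ((hasDerivAt_id t).const_mul (-σ₀)).exp
  -- z₀ and z₁ have zero derivative
  set z₀ : ℝ → ℝ := fun u => Real.exp (-σ₀ * u) *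
      (Real.cos (ω * α u) * x u 0 +
        Real.sin (ω * α u) / ω * (x u 0 + σ₂ * x u 1)) with hz₀def
  set z₁ : ℝ → ℝ := fun u => Real.exp (-σ₀ * u) *
      (Real.cos (ω * α u) * x u 1 -
        Real.sin (ω * α u) / ω * (σ₁ * x u 0 + x u 1)) with hz₁def
  have hz₀ : ∀ t, HasDerivAt z₀ 0 t := by
    intro t
    have h := (hE t).mul (((hc t).mul (hx0 t)).add
      (((hs t).div_const ω).mul ((hx0 t).add ((hx1 t).const_mul σ₂))))
    convert h using 1
    · rfl
    · rfl
    · rfl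
    simp only [Pi.mul_apply, Pi.add_apply, Pi.sub_apply]
    field_simp
    linear_combination (Real.exp (-(σ₀ * t)) * x t 0 *
      Real.sin (ω * α t) * a t) * hω2
  have hz₁ : ∀ t, HasDerivAt z₁ 0 t := by
    intro t
    have h := (hE t).mul (((hc t).mul (hx1 t)).sub
      (((hs t).div_const ω).mul (((hx0 t).const_mul σ₁).add (hx1 t))))
    convert h using 1
    · rfl
    · rfl
    · rfl
    simp only [Pi.mul_apply, Pi.add_apply, Pi.sub_apply]
    field_simp
    linear_combination (Real.exp (-(σ₀ * t)) * x t 1 *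
      Real.sin (ω * α t) * a t) * hω2
  have hconst₀ : ∀ t, z₀ t = x 0 0 := by
    intro t
    have h := is_const_of_deriv_eq_zero (f := z₀)
      (fun u => (hz₀ u).differentiableAt) (fun u => (hz₀ u).deriv) t 0
    rw [h]
    simp [hz₀def, hαdef, intervalIntegral.integral_same]
  have hconst₁ : ∀ t, z₁ t = x 0 1 := by
    intro t
    have h := is_const_of_deriv_eq_zero (f := z₁)
      (fun u => (hz₁ u).differentiableAt) (fun u => (hz₁ u).deriv) t 0
    rw [h]
    simp [hz₁def, hαdef, intervalIntegral.integral_same]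
  -- solve for x
  set k₀ : ℝ := x 0 0
  set k₁ : ℝ := x 0 1
  have hsol : ∀ t,
      x t 0 * ω = Real.exp (σ₀ * t) *
        ((Real.cos (ω * α t) * ω - Real.sin (ω * α t)) * k₀
          - σ₂ * Real.sin (ω * α t) * k₁) ∧
      x t 1 * ω = Real.exp (σ₀ * t) *
        (σ₁ * Real.sin (ω * α t) * k₀
          + (Real.cos (ω * α t) * ω + Real.sin (ω * α t)) * k₁) := by
    intro t
    have h0 := hconst₀ t
    have h1 := hconst₁ t
    set c := Real.cos (ω * α t)
    set s := Real.sin (ω * α t)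
    have hpyth : s ^ 2 + c ^ 2 = 1 := Real.sin_sq_add_cos_sq _
    have hEinv : Real.exp (-σ₀ * t) = (Real.exp (σ₀ * t))⁻¹ := by
      rw [← Real.exp_neg]; ring_nf
    have hEpos : (0:ℝ) < Real.exp (σ₀ * t) := Real.exp_pos _
    rw [hz₀def] at h0
    rw [hz₁def] at h1
    simp only [hEinv] at h0 h1
    rw [inv_mul_eq_div, div_eq_iff (ne_of_gt hEpos)] at h0 h1
    field_simp at h0 h1
    constructor
    · have gω : (x t 0 * ω) * ω = (Real.exp (σ₀ * t) *
          ((c * ω - s) * k₀ - σ₂ * s * k₁)) * ω := by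
        linear_combination (c * ω - s) * h0 - σ₂ * s * h1
          - (x t 0 * ω ^ 2) * hpyth + (x t 0 * s ^ 2) * hω2
      exact mul_right_cancel₀ hωne gω
    · have gω : (x t 1 * ω) * ω = (Real.exp (σ₀ * t) *
          (σ₁ * s * k₀ + (c * ω + s) * k₁)) * ω := by
        linear_combination σ₁ * s * h0 + (c * ω + s) * h1
          - (x t 1 * ω ^ 2) * hpyth + (x t 1 * s ^ 2) * hω2
      exact mul_right_cancel₀ hωne gω
  -- final limit
  have htend : Tendsto (fun t : ℝ => σ₀ * t) atTop atBot := by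
    have : Tendsto (fun t : ℝ => t) atTop atTop := tendsto_id
    exact Tendsto.const_mul_atTop_of_neg hσ₀ this
  have hexp : Tendsto (fun t : ℝ => Real.exp (σ₀ * t)) atTop (nhds 0) :=
    Real.tendsto_exp_atBot.comp htend
  have habs : ∀ (u v : ℝ), |Real.cos u * ω - Real.sin u| ≤ ω + 1 ∧
      |Real.cos v * ω + Real.sin v| ≤ ω + 1 := by
    intro u v
    have h1 := Real.abs_cos_le_one u
    have h2 := Real.abs_sin_le_one u
    have h3 := Real.abs_cos_le_one v
    have h4 := Real.abs_sin_le_one v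
    constructor
    · calc |Real.cos u * ω - Real.sin u| ≤ |Real.cos u * ω| + |Real.sin u| :=
            abs_sub _ _
        _ = |Real.cos u| * ω + |Real.sin u| := by rw [abs_mul, abs_of_pos hωpos]
        _ ≤ 1 * ω + 1 := by gcongr
        _ = ω + 1 := by ring
    · calc |Real.cos v * ω + Real.sin v| ≤ |Real.cos v * ω| + |Real.sin v| :=
            abs_add_le _ _
        _ = |Real.cos v| * ω + |Real.sin v| := by rw [abs_mul, abs_of_pos hωpos]
        _ ≤ 1 * ω + 1 := by gcongr
        _ = ω + 1 := by ring
  set C : ℝ := ((ω + 1) * |k₀| + (ω + 1) * (|σ₂| * |k₁| + |σ₁| * |k₀| + |k₁|)) / ω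
    with hCdef
  have hbound : ∀ (i : Fin 2) t, |x t i| ≤ C * Real.exp (σ₀ * t) := by
    intro i t
    have hEpos : (0 : ℝ) < Real.exp (σ₀ * t) := Real.exp_pos _
    have hs1 : |Real.sin (ω * α t)| ≤ 1 := Real.abs_sin_le_one _
    have hD : |x t i| * ω ≤ ((ω + 1) * |k₀| + (ω + 1) *
        (|σ₂| * |k₁| + |σ₁| * |k₀| + |k₁|)) * Real.exp (σ₀ * t) := by
      fin_cases i
      · have h := (hsol t).1
        calc |x t 0| * ω = |x t 0 * ω| := by
              rw [abs_mul, abs_of_pos hωpos]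
          _ = Real.exp (σ₀ * t) * |(Real.cos (ω * α t) * ω - Real.sin (ω * α t)) * k₀
                - σ₂ * Real.sin (ω * α t) * k₁| := by
              rw [h, abs_mul, abs_of_pos hEpos]
          _ ≤ Real.exp (σ₀ * t) * ((ω + 1) * |k₀| + |σ₂| * |k₁|) := by
              have hle : |(Real.cos (ω * α t) * ω - Real.sin (ω * α t)) * k₀
                  - σ₂ * Real.sin (ω * α t) * k₁| ≤ (ω + 1) * |k₀| + |σ₂| * |k₁| := by
                calc |(Real.cos (ω * α t) * ω - Real.sin (ω * α t)) * k₀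
                      - σ₂ * Real.sin (ω * α t) * k₁|
                    ≤ |(Real.cos (ω * α t) * ω - Real.sin (ω * α t)) * k₀|
                      + |σ₂ * Real.sin (ω * α t) * k₁| := abs_sub _ _
                  _ = |Real.cos (ω * α t) * ω - Real.sin (ω * α t)| * |k₀|
                      + |σ₂| * (|Real.sin (ω * α t)| * |k₁|) := by
                      rw [abs_mul, abs_mul, abs_mul, mul_assoc]
                  _ ≤ (ω + 1) * |k₀| + |σ₂| * (1 * |k₁|) := by
                      gcongr
                      · exact (habs (ω * α t) (ω * α t)).1
                  _ = (ω + 1) * |k₀| + |σ₂| * |k₁| := by ring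
              gcongr
          _ ≤ ((ω + 1) * |k₀| + (ω + 1) * (|σ₂| * |k₁| + |σ₁| * |k₀| + |k₁|))
                * Real.exp (σ₀ * t) := by
              rw [mul_comm]
              apply mul_le_mul_of_nonneg_right _ (le_of_lt hEpos)
              have hω1 : (0:ℝ) ≤ ω + 1 := by linarith
              nlinarith [mul_nonneg hωpos.le
                  (mul_nonneg (abs_nonneg σ₂) (abs_nonneg k₁)),
                mul_nonneg hωpos.le
                  (mul_nonneg (abs_nonneg σ₁) (abs_nonneg k₀)),
                mul_nonneg hω1 (mul_nonneg (abs_nonneg σ₁) (abs_nonneg k₀)),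
                mul_nonneg hω1 (mul_nonneg (abs_nonneg σ₂) (abs_nonneg k₁)),
                mul_nonneg hω1 (abs_nonneg k₁), mul_nonneg hω1 (abs_nonneg k₀)]
      · have h := (hsol t).2
        calc |x t 1| * ω = |x t 1 * ω| := by
              rw [abs_mul, abs_of_pos hωpos]
          _ = Real.exp (σ₀ * t) * |σ₁ * Real.sin (ω * α t) * k₀
                + (Real.cos (ω * α t) * ω + Real.sin (ω * α t)) * k₁| := by
              rw [h, abs_mul, abs_of_pos hEpos]
          _ ≤ Real.exp (σ₀ * t) * (|σ₁| * |k₀| + (ω + 1) * |k₁|) := by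
              have hle : |σ₁ * Real.sin (ω * α t) * k₀
                  + (Real.cos (ω * α t) * ω + Real.sin (ω * α t)) * k₁|
                  ≤ |σ₁| * |k₀| + (ω + 1) * |k₁| := by
                calc |σ₁ * Real.sin (ω * α t) * k₀
                      + (Real.cos (ω * α t) * ω + Real.sin (ω * α t)) * k₁|
                    ≤ |σ₁ * Real.sin (ω * α t) * k₀|
                      + |(Real.cos (ω * α t) * ω + Real.sin (ω * α t)) * k₁| := abs_add_le _ _
                  _ = |σ₁| * (|Real.sin (ω * α t)| * |k₀|)
                      + |Real.cos (ω * α t) * ω + Real.sin (ω * α t)| * |k₁| := by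
                      rw [abs_mul, abs_mul, abs_mul, mul_assoc]
                  _ ≤ |σ₁| * (1 * |k₀|) + (ω + 1) * |k₁| := by
                      gcongr
                      · exact (habs (ω * α t) (ω * α t)).2
                  _ = |σ₁| * |k₀| + (ω + 1) * |k₁| := by ring
              gcongr
          _ ≤ ((ω + 1) * |k₀| + (ω + 1) * (|σ₂| * |k₁| + |σ₁| * |k₀| + |k₁|))
                * Real.exp (σ₀ * t) := by
              rw [mul_comm]
              apply mul_le_mul_of_nonneg_right _ (le_of_lt hEpos)
              have hω1 : (0:ℝ) ≤ ω + 1 := by linarith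
              nlinarith [mul_nonneg hωpos.le
                  (mul_nonneg (abs_nonneg σ₂) (abs_nonneg k₁)),
                mul_nonneg hωpos.le
                  (mul_nonneg (abs_nonneg σ₁) (abs_nonneg k₀)),
                mul_nonneg hω1 (mul_nonneg (abs_nonneg σ₁) (abs_nonneg k₀)),
                mul_nonneg hω1 (mul_nonneg (abs_nonneg σ₂) (abs_nonneg k₁)),
                mul_nonneg hω1 (abs_nonneg k₁), mul_nonneg hω1 (abs_nonneg k₀)]
    rw [hCdef, div_mul_eq_mul_div, le_div_iff₀ hωpos]
    linarith [hD]
  rw [tendsto_pi_nhds]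
  intro i
  have hC : Tendsto (fun t : ℝ => C * Real.exp (σ₀ * t)) atTop (nhds 0) := by
    simpa using hexp.const_mul C
  have : Tendsto (fun t => x t i) atTop (nhds 0) := by
    apply squeeze_zero_norm (fun t => ?_) hC
    simpa [Real.norm_eq_abs] using hbound i t
  simpa using this
end
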